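/- Let (A, ∘, ·) be a skew brace with λ_a(b) = a⁻¹ · (a ∘ b), ρ_a(b) = (a ∘ b) · a⁻¹. Let (X, ∘) be a left (A, ∘)-set and π: X → End(A, ·) a family of (A, ·)-endomorphisms. Then π is equivariant (π(a ∘ x) = λ_a ∘ π(x) ∘ ρ_a⁻¹) if and only if π_x(a ∘ b) = λ_a(π_{ā ∘ x}(b)) · π_x(a) for all a, b ∈ A and x ∈ X, where ā is the ∘-inverse of a. -/
import Mathlib


structure SkewBrace (A : Type*) where
  circ : A → A → A
  cinv : A → A
  ce : A
  mul : A → A → A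
  inv : A → A
  e : A
  circ_assoc : ∀ a b c, circ (circ a b) c = circ a (circ b c)
  ce_circ : ∀ a, circ ce a = a
  circ_ce : ∀ a, circ a ce = a
  cinv_circ : ∀ a, circ (cinv a) a = ce
  circ_cinv : ∀ a, circ a (cinv a) = ce
  mul_assoc : ∀ a b c, mul (mul a b) c = mul a (mul b c)
  e_mul : ∀ a, mul e a = a
  mul_e : ∀ a, mul a e = a
  inv_mul : ∀ a, mul (inv a) a = e
  mul_inv : ∀ a, mul a (inv a) = e
  distrib : ∀ a b c, circ a (mul b c) = mul (mul (circ a b) (inv a)) (circ a c)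

def SkewBrace.lam {A : Type*} (B : SkewBrace A) (a b : A) : A :=
  B.mul (B.inv a) (B.circ a b)

def SkewBrace.rho {A : Type*} (B : SkewBrace A) (a b : A) : A :=
  B.mul (B.circ a b) (B.inv a)

/-- The diamond action `a ⋄ χ = λ_a ∘ χ ∘ ρ_a⁻¹` on `End(A, ·)`. -/
def SkewBrace.dia {A : Type*} (B : SkewBrace A) (a : A) (χ : A → A) : A → A :=
  fun b => B.lam a (χ (B.rho (B.cinv a) b))

namespace SkewBrace
variable {A : Type*} (B : SkewBrace A)

theorem mul_left_cancel {a b c : A} (h : B.mul a b = B.mul a c) : b = c := by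
  have h2 := congrArg (B.mul (B.inv a)) h
  rwa [← B.mul_assoc, ← B.mul_assoc, B.inv_mul, B.e_mul, B.e_mul] at h2

theorem mul_right_cancel {a b c : A} (h : B.mul b a = B.mul c a) : b = c := by
  have h2 := congrArg (fun z => B.mul z (B.inv a)) h
  simp only [B.mul_assoc, B.mul_inv, B.mul_e] at h2
  exact h2

theorem inv_unique {a b : A} (h : B.mul a b = B.e) : b = B.inv a :=
  B.mul_left_cancel (by rw [h, B.mul_inv])

theorem circ_e (a : A) : B.circ a B.e = a := by
  have h := B.distrib a B.e B.e
  rw [B.e_mul] at h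
  have h1 : B.mul (B.circ a B.e) (B.inv a) = B.e :=
    B.mul_right_cancel (a := B.circ a B.e) (by rw [B.e_mul, ← h])
  exact B.mul_right_cancel (a := B.inv a) (by rw [h1, B.mul_inv])

theorem ce_eq_e : B.ce = B.e := by
  have h1 := B.circ_e B.ce
  have h2 := B.ce_circ B.e
  rw [h2] at h1; exact h1.symm

theorem lam_mul (a u v : A) :
    B.lam a (B.mul u v) = B.mul (B.lam a u) (B.lam a v) := by
  simp only [SkewBrace.lam, B.distrib, B.mul_assoc]

theorem hom_e {f : A → A} (hf : ∀ u v, f (B.mul u v) = B.mul (f u) (f v)) :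
    f B.e = B.e := by
  have h : B.mul (f B.e) (f B.e) = B.mul (f B.e) B.e := by
    rw [← hf, B.e_mul, B.mul_e]
  exact B.mul_left_cancel h

theorem hom_inv {f : A → A} (hf : ∀ u v, f (B.mul u v) = B.mul (f u) (f v))
    (u : A) : f (B.inv u) = B.inv (f u) := by
  apply B.inv_unique
  rw [← hf, B.mul_inv, B.hom_e hf]

theorem cinv_circ_circ (a b : A) : B.circ (B.cinv a) (B.circ a b) = b := by
  rw [← B.circ_assoc, B.cinv_circ, B.ce_circ]

theorem rho_cinv_circ (a b : A) :
    B.rho (B.cinv a) (B.circ a b) = B.mul b (B.inv (B.cinv a)) := by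
  rw [SkewBrace.rho, B.cinv_circ_circ]

theorem rho_cinv_self (a : A) :
    B.rho (B.cinv a) a = B.inv (B.cinv a) := by
  rw [SkewBrace.rho, B.cinv_circ, B.ce_eq_e, B.e_mul]

end SkewBrace

/-- Equivariance of `π` is equivalent to the twisted cocycle identity. -/
theorem skewBrace_equivariant_iff_cocycle {A X : Type*} (B : SkewBrace A)
    (act : A → X → X)
    (hact_e : ∀ x, act B.ce x = x)
    (hact : ∀ a b x, act (B.circ a b) x = act a (act b x))
    (π : X → A → A)
    (hπ : ∀ x a b, π x (B.mul a b) = B.mul (π x a) (π x b)) :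
    (∀ a x, π (act a x) = B.dia a (π x)) ↔
      (∀ (a b : A) (x : X),
        π x (B.circ a b) = B.mul (B.lam a (π (act (B.cinv a) x) b)) (π x a)) := by
  have lamπ_mul : ∀ a x u v,
      B.lam a (π x (B.mul u v)) = B.mul (B.lam a (π x u)) (B.lam a (π x v)) := by
    intro a x u v
    rw [hπ, B.lam_mul]
  constructor
  · intro h a b x
    set y := act (B.cinv a) x with hy
    have hx : π x = B.dia a (π y) := by
      have := h a y
      rwa [hy, ← hact, B.circ_cinv, hact_e] at this
    rw [hx]
    show B.lam a (π y (B.rho (B.cinv a) (B.circ a b)))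
      = B.mul (B.lam a (π y b)) (B.lam a (π y (B.rho (B.cinv a) a)))
    rw [B.rho_cinv_circ, B.rho_cinv_self, lamπ_mul]
  · intro h a x
    funext c
    set x' := act a x with hx'
    have hxx : act (B.cinv a) x' = x := by
      rw [hx', ← hact, B.cinv_circ, hact_e]
    -- compute π x' a
    have hπe : π x' B.e = B.e := B.hom_e (hπ x')
    have ha : π x' a = B.lam a (π x (B.inv (B.cinv a))) := by
      have hc := h a (B.cinv a) x'
      rw [B.circ_cinv, B.ce_eq_e, hπe, hxx] at hc
      have : π x' a = B.inv (B.lam a (π x (B.cinv a))) := by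
        apply B.mul_left_cancel (a := B.lam a (π x (B.cinv a)))
        rw [← hc, B.mul_inv]
      rw [this, B.hom_inv (hπ x), B.hom_inv (B.lam_mul a)]
    have hc := h a (B.circ (B.cinv a) c) x'
    rw [← B.circ_assoc, B.circ_cinv, B.ce_circ, hxx, ha] at hc
    show π x' c = B.lam a (π x (B.rho (B.cinv a) c))
    rw [hc, SkewBrace.rho, lamπ_mul]
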